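/- Let (b_1,...,b_k) and (c_1,...,c_l) be linear-dual strings and let a = (b_1+3, b_2,...,b_k, 2, c_l,...,c_1). Then a belongs to the family S_{2c} (i.e., a is, up to cyclic reordering and reversal, of the form (3+x_1, 2^{[x_2]},..., 3+x_{2k+1}, 2^{[x_1]}, 3+x_2, 2^{[x_3]},..., 3+x_{2k}, 2^{[x_{2k+1}]}) with all x_i ≥ 0) if and only if (b_1+1, b_2,...,b_k) is a palindrome. -/

import Mathlib

/-- Numerator and denominator of the Hirzebruch–Jung continued fraction
`[a_1,...,a_n] = a_1 - 1/(a_2 - 1/(⋯ - 1/a_n))`; the empty fraction is `1/0`. -/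
def hj : List ℕ → ℤ × ℤ
  | [] => (1, 0)
  | a :: l => ((a : ℤ) * (hj l).1 - (hj l).2, (hj l).1)

def hjNum (l : List ℕ) : ℤ := (hj l).1

def hjDen (l : List ℕ) : ℤ := (hj l).2

/-- Linear-dual strings: entries `≥ 2` and `[c] = p/(p-q)` where `[b] = p/q`. -/
def IsLinearDual (b c : List ℕ) : Prop :=
  (∀ x ∈ b, 2 ≤ x) ∧ (∀ x ∈ c, 2 ≤ x) ∧
    hjNum c = hjNum b ∧ hjDen b + hjDen c = hjNum b

/-- Equivalence of strings up to cyclic reordering and reversal. -/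
def cycEquiv (a b : List ℕ) : Prop :=
  ∃ m, a.rotate m = b ∨ (a.rotate m).reverse = b

/-- The string `(3+x_1, 2^{[x_2]}, 3+x_3, 2^{[x_4]}, ..., 3+x_{2k+1}, 2^{[x_1]},
3+x_2, 2^{[x_3]}, ..., 3+x_{2k}, 2^{[x_{2k+1}]})`, with the parameters indexed
cyclically by `ZMod (2k+1)`: the `j`-th block is `(3 + x_{1+2j}, 2^{[x_{2+2j}]})`. -/
def s2cStr (k : ℕ) (x : ZMod (2 * k + 1) → ℕ) : List ℕ :=
  (List.range (2 * k + 1)).flatMap fun j =>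
    (3 + x (1 + 2 * (j : ZMod (2 * k + 1)))) ::
      List.replicate (x (2 + 2 * (j : ZMod (2 * k + 1)))) 2

/-- Membership in the family `S_{2c}`, up to cyclic reordering and reversal. -/
def InS2c (a : List ℕ) : Prop := ∃ k x, cycEquiv a (s2cStr k x)


/-- 2-runs interleaved with big entries: `seg [g₀, v₁, g₁, v₂, ...] =
2^[g₀] ++ [3+v₁] ++ 2^[g₁] ++ [3+v₂] ++ ...`. -/
def seg : List ℕ → List ℕ
  | [] => []
  | [g] => List.replicate g 2
  | g :: v :: r => List.replicate g 2 ++ (3 + v) :: seg r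

def wrd : List ℕ → List ℕ
  | [] => []
  | v :: t => (3 + v) :: seg t

@[simp] lemma seg_nil : seg [] = [] := rfl
@[simp] lemma seg_single (g : ℕ) : seg [g] = List.replicate g 2 := rfl
lemma seg_cons_cons (g v : ℕ) (r : List ℕ) :
    seg (g :: v :: r) = List.replicate g 2 ++ (3 + v) :: seg r := rfl

lemma seg_cons_wrd (g : ℕ) (r : List ℕ) :
    seg (g :: r) = List.replicate g 2 ++ wrd r := by
  cases r with
  | nil => simp [wrd]
  | cons v r' => simp [seg_cons_cons, wrd]

@[simp] lemma wrd_nil : wrd [] = [] := rfl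
lemma wrd_cons (v : ℕ) (t : List ℕ) : wrd (v :: t) = (3 + v) :: seg t := rfl

lemma mem_seg_ge_two {x : ℕ} {l : List ℕ} (h : x ∈ seg l) : 2 ≤ x := by
  induction l using seg.induct with
  | case1 => simp at h
  | case2 g => simp [seg] at h; omega
  | case3 g v r ih =>
    rw [seg_cons_cons] at h
    rcases List.mem_append.1 h with h | h
    · simp at h; omega
    · rcases List.mem_cons.1 h with h | h
      · omega
      · exact ih h

lemma mem_wrd_ge_two {x : ℕ} {l : List ℕ} (h : x ∈ wrd l) : 2 ≤ x := by
  cases l with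
  | nil => simp at h
  | cons v t =>
    rw [wrd_cons] at h
    rcases List.mem_cons.1 h with h | h
    · omega
    · exact mem_seg_ge_two h

/-- appending to an even-length list -/
lemma seg_append_even (u v : List ℕ) (h : u.length % 2 = 0) :
    seg (u ++ v) = seg u ++ seg v := by
  induction u using seg.induct with
  | case1 => simp
  | case2 g => simp at h
  | case3 g w r ih =>
    simp only [List.length_cons] at h
    have : r.length % 2 = 0 := by omega
    simp [seg_cons_cons, ih this]

lemma seg_append_single_odd (u : List ℕ) (v : ℕ) (h : u.length % 2 = 1) :
    seg (u ++ [v]) = seg u ++ [3 + v] := by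
  induction u using seg.induct with
  | case1 => simp at h
  | case2 g => simp [seg_cons_cons]
  | case3 g w r ih =>
    simp only [List.length_cons] at h
    have : r.length % 2 = 1 := by omega
    simp [seg_cons_cons, ih this]

lemma seg_succ_head (g : ℕ) (r : List ℕ) :
    seg ((g + 1) :: r) = 2 :: seg (g :: r) := by
  cases r with
  | nil => simp [List.replicate_succ]
  | cons v r' => simp [seg_cons_cons, List.replicate_succ]

lemma seg_reverse (u : List ℕ) (h : u.length % 2 = 1) :
    (seg u).reverse = seg u.reverse := by
  induction u using seg.induct with
  | case1 => simp at h
  | case2 g => simp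
  | case3 g v r ih =>
    simp only [List.length_cons] at h
    have hr : r.length % 2 = 1 := by omega
    have h1 : seg (r.reverse ++ [v]) = seg r.reverse ++ [3 + v] :=
      seg_append_single_odd _ _ (by simpa using hr)
    have h2 : seg ((r.reverse ++ [v]) ++ [g]) = seg (r.reverse ++ [v]) ++ seg [g] :=
      seg_append_even _ _ (by simp; omega)
    have h3 : (g :: v :: r).reverse = (r.reverse ++ [v]) ++ [g] := by simp
    rw [h3, h2, h1, seg_cons_cons, ← ih hr]
    simp

lemma replicate_two_big_inj {a b x y : ℕ} {X Y : List ℕ}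
    (h : List.replicate a 2 ++ (3 + x) :: X = List.replicate b 2 ++ (3 + y) :: Y) :
    a = b ∧ x = y ∧ X = Y := by
  induction a generalizing b with
  | zero =>
    cases b with
    | zero => simpa using h
    | succ b =>
      simp [List.replicate_succ] at h
      omega
  | succ a ih =>
    cases b with
    | zero =>
      simp [List.replicate_succ] at h
      omega
    | succ b =>
      simp only [List.replicate_succ, List.cons_append, List.cons.injEq] at h
      have := ih h.2
      exact ⟨by omega, this.2⟩

lemma seg_inj {u v : List ℕ} (hp : u.length % 2 = v.length % 2)
    (h : seg u = seg v) : u = v := by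
  induction u using seg.induct generalizing v with
  | case1 =>
    cases v with
    | nil => rfl
    | cons g w =>
      cases w with
      | nil => simp at hp
      | cons a r => 
        rw [seg_nil, seg_cons_cons] at h
        have : (3 + a) ∈ ([] : List ℕ) := by rw [h]; simp
        simp at this
  | case2 g =>
    cases v with
    | nil => simp at hp
    | cons g' w =>
      cases w with
      | nil =>
        rw [seg_single, seg_single] at h
        have := congrArg List.length h
        simp at this
        simp [this]
      | cons a r =>
        rw [seg_single, seg_cons_cons] at h
        have : (3 + a) ∈ List.replicate g 2 := by rw [h]; simp
        simp at this
        omega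
  | case3 g x r ih =>
    cases v with
    | nil =>
      rw [seg_cons_cons, seg_nil] at h
      simp at h
    | cons g' w =>
      cases w with
      | nil =>
        rw [seg_cons_cons, seg_single] at h
        have : (3 + x) ∈ List.replicate g' 2 := by rw [← h]; simp
        simp at this
        omega
      | cons a r' =>
        rw [seg_cons_cons, seg_cons_cons] at h
        obtain ⟨h1, h2, h3⟩ := replicate_two_big_inj h
        simp only [List.length_cons] at hp
        have := ih (v := r') (by omega) h3
        simp [h1, h2, this]

lemma wrd_inj {u v : List ℕ} (hu : u.length % 2 = 0) (hv : v.length % 2 = 0)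
    (h : wrd u = wrd v) : u = v := by
  cases u with
  | nil =>
    cases v with
    | nil => rfl
    | cons a t => simp [wrd] at h
  | cons a t =>
    cases v with
    | nil => simp [wrd] at h
    | cons b s =>
      rw [wrd_cons, wrd_cons] at h
      simp only [List.cons.injEq] at h
      simp only [List.length_cons] at hu hv
      have := seg_inj (u := t) (v := s) (by omega) h.2
      simp [this]; omega

lemma wrd_append_pair (r : List ℕ) (hr : r.length % 2 = 0) (v g : ℕ) :
    wrd (r ++ [v, g]) = wrd r ++ (3 + v) :: List.replicate g 2 := by
  cases r with
  | nil => simp [wrd, seg]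
  | cons a t =>
    simp only [List.length_cons] at hr
    rw [List.cons_append, wrd_cons, wrd_cons]
    have h1 : t ++ [v, g] = (t ++ [v]) ++ [g] := by simp
    rw [h1, seg_append_even _ _ (by simp; omega), seg_append_single_odd _ _ (by omega)]
    simp

lemma wrd_append_single (v : ℕ) (t : List ℕ) (g : ℕ) (h : t.length % 2 = 0) :
    wrd ((v :: t) ++ [g]) = wrd (v :: t) ++ List.replicate g 2 := by
  rw [List.cons_append, wrd_cons, wrd_cons, seg_append_even _ _ h]
  simp

lemma replicate_rotate (k : ℕ) (s : List ℕ) :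
    (List.replicate k (2:ℕ) ++ s).rotate k = s ++ List.replicate k 2 := by
  induction k generalizing s with
  | zero => simp
  | succ k ih =>
    rw [List.replicate_succ, List.cons_append, List.rotate_cons_succ]
    have : List.replicate k (2:ℕ) ++ s ++ [2] = List.replicate k 2 ++ (s ++ [2]) := by simp
    rw [this, ih]
    simp [List.replicate_succ']

lemma wrd_rotate_block (v g : ℕ) (r : List ℕ) :
    (wrd (v :: g :: r)).rotate (g + 1) = wrd r ++ (3 + v) :: List.replicate g 2 := by
  rw [wrd_cons, List.rotate_cons_succ, seg_cons_wrd]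
  have : List.replicate g 2 ++ wrd r ++ [3 + v] = List.replicate g 2 ++ (wrd r ++ [3 + v]) := by
    simp
  rw [this, replicate_rotate]
  simp

lemma rotate_two (v g : ℕ) (r : List ℕ) : (v :: g :: r).rotate 2 = r ++ [v, g] := by
  rw [List.rotate_eq_drop_append_take (by simp)]
  simp

lemma wrd_len_even_cases (z : List ℕ) (h : z.length % 2 = 0) :
    z = [] ∨ ∃ v g r, z = v :: g :: r ∧ r.length % 2 = 0 := by
  cases z with
  | nil => exact Or.inl rfl
  | cons v t =>
    cases t with
    | nil => simp at h
    | cons g r =>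
      right
      exact ⟨v, g, r, rfl, by simp at h; omega⟩

lemma rot_align : ∀ m z, z.length % 2 = 0 → 3 ≤ ((wrd z).rotate m).headI →
    ∃ r, (wrd z).rotate m = wrd (z.rotate (2 * r)) := by
  intro m
  induction m using Nat.strong_induction_on with
  | _ m ih =>
    intro z hz hhead
    rcases wrd_len_even_cases z hz with rfl | ⟨v, g, r, rfl, hr⟩
    · simp [wrd] at hhead
    · have hLpos : 0 < (wrd (v :: g :: r)).length := by rw [wrd_cons]; simp
      have hmod : (wrd (v :: g :: r)).rotate m
          = (wrd (v :: g :: r)).rotate (m % (wrd (v :: g :: r)).length) :=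
        (List.rotate_mod _ m).symm
      rcases Nat.eq_zero_or_pos (m % (wrd (v :: g :: r)).length) with h0 | hpos
      · refine ⟨0, ?_⟩
        rw [hmod, h0, List.rotate_zero, List.rotate_zero]
      · have hmL : m % (wrd (v :: g :: r)).length < (wrd (v :: g :: r)).length :=
          Nat.mod_lt _ hLpos
        rcases Nat.exists_eq_add_of_lt hpos with ⟨m1, hm1⟩
        rw [Nat.zero_add] at hm1
        by_cases hg : m1 < g
        · -- lands inside the replicate run: contradiction
          exfalso
          rw [hmod, hm1] at hhead
          rw [wrd_cons, seg_cons_wrd, List.rotate_cons_succ] at hhead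
          have hsplit : List.replicate g (2:ℕ) = List.replicate m1 2 ++ List.replicate (g - m1) 2 := by
            rw [← List.replicate_add]
            congr 1
            omega
          rw [hsplit] at hhead
          have hassoc : (List.replicate m1 2 ++ List.replicate (g - m1) 2 ++ wrd r) ++ [3 + v]
              = List.replicate m1 2 ++ (List.replicate (g - m1) 2 ++ wrd r ++ [3 + v]) := by
            simp only [List.append_assoc]
          rw [hassoc, replicate_rotate] at hhead
          rcases Nat.exists_eq_add_of_lt hg with ⟨k, hk⟩
          rw [show g - m1 = k + 1 by omega, List.replicate_succ] at hhead
          simp at hhead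
        · push_neg at hg
          have hm1g : m % (wrd (v :: g :: r)).length = (g + 1) + (m1 - g) := by omega
          have hrot1 : (wrd (v :: g :: r)).rotate (m % (wrd (v :: g :: r)).length)
              = (wrd (r ++ [v, g])).rotate (m1 - g) := by
            rw [hm1g, ← List.rotate_rotate, wrd_rotate_block, ← wrd_append_pair r hr]
          have hlt : m1 - g < m := by
            have : m % (wrd (v :: g :: r)).length ≤ m := Nat.mod_le _ _
            omega
          have := ih (m1 - g) hlt (r ++ [v, g]) (by simp; omega)
            (by rw [hmod, hrot1] at hhead; exact hhead)
          obtain ⟨r2, hr2⟩ := this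
          refine ⟨r2 + 1, ?_⟩
          rw [hmod, hrot1, hr2, ← rotate_two, List.rotate_rotate]
          ring_nf

/-! ### reversal and doubling -/

lemma even_back_cases (z : List ℕ) (h : z.length % 2 = 0) (hne : z ≠ []) :
    ∃ z' v g, z = z' ++ [v, g] ∧ z'.length % 2 = 0 := by
  rcases wrd_len_even_cases z.reverse (by simp [h]) with h0 | ⟨g, v, t, hrev, ht⟩
  · exact absurd (by simpa using congrArg List.reverse h0) hne
  · refine ⟨t.reverse, v, g, ?_, by simpa using ht⟩
    have := congrArg List.reverse hrev
    simpa using this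

lemma wrd_reverse_T : ∀ (n : ℕ) (z' : List ℕ) (v g : ℕ), z'.length = n → z'.length % 2 = 0 →
    (wrd (z' ++ [v, g])).reverse = List.replicate g 2 ++ wrd (v :: z'.reverse) := by
  intro n
  induction n using Nat.strong_induction_on with
  | _ n ih =>
    intro z' v g hn hz'
    rcases wrd_len_even_cases z' hz' with rfl | ⟨a, b, r, rfl, hr⟩
    · simp [wrd, seg]
    · have hz2 : (a :: b :: r).length % 2 = 0 := hz'
      rw [wrd_append_pair _ hz2]
      obtain ⟨z'', c, d, heq, hz''⟩ := even_back_cases _ hz2 (by simp)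
      have hlen : z''.length < n := by
        have h9 : z''.length + 2 = n := by
          rw [← hn, heq]
          simp
        omega
      rw [heq, List.reverse_append, ih z''.length hlen z'' c d rfl hz'']
      have h2 : ((3 + v) :: List.replicate g 2).reverse = List.replicate g 2 ++ [3 + v] := by
        simp
      rw [h2]
      have h3 : (z'' ++ [c, d]).reverse = d :: c :: z''.reverse := by simp
      rw [h3, wrd_cons, wrd_cons, seg_cons_cons]
      simp

lemma double_rotate_one (w : List ℕ) : (w ++ w).rotate 1 = w.rotate 1 ++ w.rotate 1 := by
  cases w with
  | nil => simp
  | cons x s =>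
    rw [List.rotate_eq_drop_append_take (by simp), List.rotate_eq_drop_append_take (by simp)]
    simp

lemma double_rotate (w : List ℕ) (t : ℕ) : (w ++ w).rotate t = w.rotate t ++ w.rotate t := by
  induction t with
  | zero => simp
  | succ t ih =>
    have h1 : (w ++ w).rotate (t + 1) = ((w ++ w).rotate t).rotate 1 := by
      rw [List.rotate_rotate]
    rw [h1, ih, double_rotate_one, List.rotate_rotate]

lemma rot_inv (l : List ℕ) (m : ℕ) :
    (l.rotate m).rotate (l.length - m % l.length) = l := by
  cases hl : l with
  | nil => simp
  | cons x s =>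
    rw [← hl, List.rotate_rotate, ← List.rotate_mod]
    have hpos : 0 < l.length := by rw [hl]; simp
    have h2 : m % l.length < l.length := Nat.mod_lt _ hpos
    have hle : m % l.length ≤ m := Nat.mod_le m l.length
    have hmd := Nat.mod_add_div m l.length
    have h3 : m + (l.length - m % l.length) = l.length * (m / l.length) + l.length := by omega
    rw [h3, Nat.add_mod_right, Nat.mul_mod_right, List.rotate_zero]

/-! ### bridge between `InS2c` and doubled parameter words -/

lemma wrd_range_flatMap (N : ℕ) (F : ℕ → ℕ) :
    wrd ((List.range (2 * N)).map F)
      = (List.range N).flatMap (fun j => (3 + F (2 * j)) :: List.replicate (F (2 * j + 1)) 2) := by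
  induction N with
  | zero => simp [wrd]
  | succ N ih =>
    have h1 : 2 * (N + 1) = (2 * N) + 1 + 1 := by ring
    rw [h1, List.range_succ, List.range_succ, List.map_append, List.map_append,
      List.range_succ, List.flatMap_append]
    simp only [List.map_cons, List.map_nil]
    have h2 : ((List.range (2*N)).map F ++ [F (2*N)]) ++ [F (2*N+1)]
        = (List.range (2*N)).map F ++ [F (2*N), F (2*N+1)] := by simp
    rw [h2, wrd_append_pair _ (by simp [Nat.mul_mod_right]), ih]
    simp

lemma s2cStr_eq_wrd (k : ℕ) (x : ZMod (2 * k + 1) → ℕ) :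
    s2cStr k x = wrd (((List.range (2 * k + 1)).map (fun (t : ℕ) => x (1 + (t : ZMod (2 * k + 1)))))
      ++ ((List.range (2 * k + 1)).map (fun (t : ℕ) => x (1 + (t : ZMod (2 * k + 1)))))) := by
  have key := wrd_range_flatMap (2 * k + 1) (fun (t : ℕ) => x (1 + (t : ZMod (2 * k + 1))))
  have hfun : (fun (j : ℕ) => (3 + x (1 + ((2*j : ℕ) : ZMod (2*k+1)))) ::
        List.replicate (x (1 + ((2*j+1 : ℕ) : ZMod (2*k+1)))) 2)
      = fun (j : ℕ) => (3 + x (1 + 2*((j : ℕ) : ZMod (2*k+1)))) ::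
        List.replicate (x (2 + 2*((j : ℕ) : ZMod (2*k+1)))) 2 := by
    funext j
    have hcast : ((2*j : ℕ) : ZMod (2*k+1)) = 2 * ((j : ℕ) : ZMod (2*k+1)) := by push_cast; ring
    have hc2 : (1 : ZMod (2*k+1)) + ((2*j+1 : ℕ) : ZMod (2*k+1))
        = 2 + 2 * ((j : ℕ) : ZMod (2*k+1)) := by push_cast; ring
    rw [hcast, hc2]
  have hsplit : (List.range (2 * (2*k+1))).map (fun (t : ℕ) => x (1 + (t : ZMod (2 * k + 1))))
      = ((List.range (2 * k + 1)).map (fun (t : ℕ) => x (1 + (t : ZMod (2 * k + 1)))))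
      ++ ((List.range (2 * k + 1)).map (fun (t : ℕ) => x (1 + (t : ZMod (2 * k + 1))))) := by
    have h3 : 2 * (2*k+1) = (2*k+1) + (2*k+1) := by ring
    rw [h3, List.range_add, List.map_append, List.map_map]
    congr 1
    apply List.map_congr_left
    intro t ht
    simp only [Function.comp_apply]
    have hzero : (((2*k+1) + t : ℕ) : ZMod (2*k+1)) = (t : ZMod (2*k+1)) := by
      rw [Nat.cast_add, ZMod.natCast_self, zero_add]
    rw [hzero]
  rw [← hsplit, key, s2cStr, hfun]
  simp [List.flatMap_map]
  change List.flatMap _ (List.flatMap (pure ∘ fun a : ℕ => (a : ZMod (2 * k + 1))) _) = _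
  rw [List.flatMap_pure_eq_map, List.flatMap_map]

lemma inS2c_iff_doubled (a : List ℕ) :
    InS2c a ↔ ∃ h : List ℕ, h.length % 2 = 1 ∧ cycEquiv a (wrd (h ++ h)) := by
  constructor
  · rintro ⟨k, x, hcyc⟩
    refine ⟨(List.range (2 * k + 1)).map (fun (t : ℕ) => x (1 + (t : ZMod (2 * k + 1)))), ?_, ?_⟩
    · simp [Nat.mul_add_mod]
    · rwa [← s2cStr_eq_wrd]
  · rintro ⟨h, hodd, hcyc⟩
    have hne : h ≠ [] := by
      intro h0
      rw [h0] at hodd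
      simp at hodd
    have hlen : h.length = 2 * ((h.length - 1)/2) + 1 := by omega
    set k := (h.length - 1)/2 with hk
    haveI : NeZero (2 * k + 1) := ⟨by omega⟩
    refine ⟨k, fun i => h.getD ((i - 1 : ZMod (2*k+1))).val 0, ?_⟩
    have hh : (List.range (2 * k + 1)).map
        (fun (t : ℕ) => (fun i => h.getD ((i - 1 : ZMod (2*k+1))).val 0) (1 + (t : ZMod (2 * k + 1)))) = h := by
      apply List.ext_getElem
      · simp [hlen]
      · intro i h1 h2
        simp only [List.getElem_map, List.getElem_range]
        have hsub : ((1 : ZMod (2*k+1)) + (i : ZMod (2*k+1)) - 1) = (i : ZMod (2*k+1)) := by ring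
        rw [hsub, ZMod.val_natCast]
        have hilt : i < 2 * k + 1 := by simpa using h1
        rw [Nat.mod_eq_of_lt hilt, List.getD_eq_getElem _ _ h2]
    rwa [s2cStr_eq_wrd, hh]

lemma align (a : List ℕ) (h : List ℕ) (hodd : h.length % 2 = 1)
    (hcyc : cycEquiv a (wrd (h ++ h))) (hne : a ≠ []) (hhead : 3 ≤ a.headI) :
    ∃ h' : List ℕ, h'.length = h.length ∧ a = wrd (h' ++ h') := by
  have hne' : h ≠ [] := by intro h0; rw [h0] at hodd; simp at hodd
  have hheadI : 3 ≤ ((a : List ℕ)).headI := hhead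
  obtain ⟨m, hm⟩ := hcyc
  have heven : (h ++ h).length % 2 = 0 := by simp [Nat.mul_mod_right]; omega
  rcases hm with hm | hm
  · -- a.rotate m = wrd (h ++ h)
    have ha : a = (wrd (h ++ h)).rotate (a.length - m % a.length) := by
      rw [← hm, rot_inv]
    obtain ⟨r, hr⟩ := rot_align _ _ heven (by rw [← ha]; exact hhead)
    refine ⟨h.rotate (2*r), by simp, ?_⟩
    rw [ha, hr, double_rotate]
  · -- (a.rotate m).reverse = wrd (h ++ h)
    have ha0 : a.rotate m = (wrd (h ++ h)).reverse := by
      rw [← hm, List.reverse_reverse]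
    have ha : a = ((wrd (h ++ h)).reverse).rotate (a.length - m % a.length) := by
      rw [← ha0, rot_inv]
    -- express the reverse as a rotation of a doubled word
    obtain ⟨z', v, g, hz, hz'⟩ := even_back_cases (h ++ h) heven (by simp [hne'])
    have hT : (wrd (h ++ h)).reverse = List.replicate g 2 ++ wrd (v :: z'.reverse) := by
      rw [hz]; exact wrd_reverse_T z'.length z' v g rfl hz'
    have hrot : ((wrd (h ++ h)).reverse).rotate g = wrd ((v :: z'.reverse) ++ [g]) := by
      rw [hT, replicate_rotate, wrd_append_single _ _ _ (by simp at hz' ⊢; omega)]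
    have hrev1 : (v :: z'.reverse) ++ [g] = ((h ++ h).reverse).rotate 1 := by
      have h5 : (h ++ h).reverse = g :: v :: z'.reverse := by
        rw [hz]
        simp
      rw [h5, List.rotate_eq_drop_append_take (by simp)]
      simp
    have hdd : ((h ++ h).reverse).rotate 1 = (h.reverse.rotate 1) ++ (h.reverse.rotate 1) := by
      rw [List.reverse_append, double_rotate]
    have hrot2 : ((wrd (h ++ h)).reverse).rotate g
        = wrd ((h.reverse.rotate 1) ++ (h.reverse.rotate 1)) := by
      rw [hrot, hrev1, hdd]
    set w2 := (h.reverse.rotate 1) ++ (h.reverse.rotate 1) with hw2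
    have hback : (wrd (h ++ h)).reverse
        = (wrd w2).rotate ((wrd (h++h)).reverse.length - g % (wrd (h++h)).reverse.length) := by
      rw [← hrot2, rot_inv]
    have ha2 : a = (wrd w2).rotate
        (((wrd (h++h)).reverse.length - g % (wrd (h++h)).reverse.length) + (a.length - m % a.length)) := by
      rw [← List.rotate_rotate, ← hback, ← ha]
    have hw2even : w2.length % 2 = 0 := by
      rw [hw2]
      simp [Nat.mul_mod_right]
      omega
    obtain ⟨r, hr⟩ := rot_align _ _ hw2even (by rw [← ha2]; exact hhead)
    refine ⟨(h.reverse.rotate 1).rotate (2*r), by simp, ?_⟩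
    rw [ha2, hr, double_rotate]

/-! ### counting big entries -/

lemma cnt_replicate (g : ℕ) : (List.replicate g (2:ℕ)).countP (fun y => decide (3 ≤ y)) = 0 := by
  induction g with
  | zero => simp
  | succ g ih => simp [List.replicate_succ, List.countP_cons, ih]

lemma cnt_seg (u : List ℕ) : (seg u).countP (fun y => decide (3 ≤ y)) = u.length / 2 := by
  induction u using seg.induct with
  | case1 => simp
  | case2 g => simp [cnt_replicate]
  | case3 g v r ih =>
    rw [seg_cons_cons, List.countP_append, List.countP_cons, cnt_replicate, ih]
    simp only [List.length_cons]
    have hd : (decide (3 ≤ 3 + v)) = true := by simp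
    rw [hd]
    simp
    omega

lemma cnt_cycEquiv {a w : List ℕ} (h : cycEquiv a w) :
    a.countP (fun y => decide (3 ≤ y)) = w.countP (fun y => decide (3 ≤ y)) := by
  obtain ⟨m, hm | hm⟩ := h
  · rw [← hm]
    exact ((List.rotate_perm a m).countP_eq _).symm
  · rw [← hm]
    have p1 : ((a.rotate m).reverse).Perm a := ((a.rotate m).reverse_perm).trans (List.rotate_perm a m)
    exact (p1.countP_eq _).symm

lemma inS2c_cnt_odd {a : List ℕ} (h : InS2c a) :
    a.countP (fun y => decide (3 ≤ y)) % 2 = 1 := by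
  obtain ⟨hh, hodd, hcyc⟩ := (inS2c_iff_doubled a).1 h
  rw [cnt_cycEquiv hcyc]
  cases hh with
  | nil => simp at hodd
  | cons v t =>
    rw [List.cons_append, wrd_cons, List.countP_cons, cnt_seg]
    have hd : (decide (3 ≤ 3 + v)) = true := by simp
    rw [hd]
    simp only [List.length_append, List.length_cons]
    simp only [List.length_cons] at hodd
    simp
    omega

/-! ### continued fraction machinery -/

@[simp] lemma hj_nil : hj [] = (1, 0) := rfl

lemma hj_cons (a : ℕ) (l : List ℕ) :
    hj (a :: l) = ((a : ℤ) * (hj l).1 - (hj l).2, (hj l).1) := rfl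

lemma hj_dom (l : List ℕ) (h : ∀ x ∈ l, 2 ≤ x) :
    (hj l).2 < (hj l).1 ∧ 0 ≤ (hj l).2 := by
  induction l with
  | nil => simp [hj]
  | cons a t ih =>
    have ha : 2 ≤ a := h a (by simp)
    have ht := ih (fun x hx => h x (by simp [hx]))
    rw [hj_cons]
    try dsimp only
    have h2 : (2:ℤ) ≤ (a:ℤ) := by exact_mod_cast ha
    constructor
    · nlinarith [ht.1, ht.2]
    · nlinarith [ht.1, ht.2]

lemma hj_num_ge_two (a : ℕ) (l : List ℕ) (h : ∀ x ∈ (a :: l), 2 ≤ x) :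
    2 ≤ (hj (a :: l)).1 := by
  have ht := hj_dom l (fun x hx => h x (by simp [hx]))
  have ha : 2 ≤ a := h a (by simp)
  rw [hj_cons]
  try dsimp only
  have h2 : (2:ℤ) ≤ (a:ℤ) := by exact_mod_cast ha
  nlinarith [ht.1, ht.2]

lemma hj_inj : ∀ (u v : List ℕ), (∀ x ∈ u, 2 ≤ x) → (∀ x ∈ v, 2 ≤ x) →
    hj u = hj v → u = v := by
  intro u
  induction u with
  | nil =>
    intro v _ hv h
    cases v with
    | nil => rfl
    | cons a t =>
      exfalso
      have := hj_num_ge_two a t hv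
      rw [← h] at this
      simp [hj] at this
  | cons a t ih =>
    intro v hu hv h
    cases v with
    | nil =>
      exfalso
      have := hj_num_ge_two a t hu
      rw [h] at this
      simp [hj] at this
    | cons b s =>
      have hts : (hj t).1 = (hj s).1 := by
        have := congrArg Prod.snd h
        simpa [hj_cons] using this
      have hdt := hj_dom t (fun x hx => hu x (by simp [hx]))
      have hds := hj_dom s (fun x hx => hv x (by simp [hx]))
      have hfst := congrArg Prod.fst h
      simp only [hj_cons] at hfst
      try dsimp only at hfst
      rw [hts] at hfst
      have hab : a = b ∧ (hj t).2 = (hj s).2 := by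
        rw [hts] at hdt
        rcases lt_trichotomy a b with hlt | heq | hgt
        · exfalso
          have h2 : (a:ℤ) + 1 ≤ (b:ℤ) := by exact_mod_cast hlt
          nlinarith [hdt.1, hdt.2, hds.1, hds.2]
        · subst heq
          exact ⟨rfl, by nlinarith [hfst]⟩
        · exfalso
          have h2 : (b:ℤ) + 1 ≤ (a:ℤ) := by exact_mod_cast hgt
          nlinarith [hdt.1, hdt.2, hds.1, hds.2]
      have hts2 : hj t = hj s := Prod.ext hts hab.2
      rw [hab.1, ih s (fun x hx => hu x (by simp [hx])) (fun x hx => hv x (by simp [hx])) hts2]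

lemma hj_replicate (m : ℕ) (w : List ℕ) :
    hj (List.replicate m 2 ++ w)
      = ((m+1) * (hj w).1 - m * (hj w).2, m * (hj w).1 - ((m:ℤ) - 1) * (hj w).2) := by
  induction m with
  | zero => simp
  | succ m ih =>
    rw [List.replicate_succ, List.cons_append, hj_cons, ih]
    try dsimp only
    simp only [Prod.mk.injEq]
    push_cast
    constructor <;> ring

lemma dual_unique {b c c' : List ℕ} (h : IsLinearDual b c) (h' : IsLinearDual b c') :
    c = c' := by
  obtain ⟨hb, hc, hn, hd⟩ := h
  obtain ⟨_, hc', hn', hd'⟩ := h'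
  apply hj_inj _ _ hc hc'
  apply Prod.ext
  · show (hj c).1 = (hj c').1
    simp only [hjNum] at hn hn'
    rw [hn, hn']
  · show (hj c).2 = (hj c').2
    simp only [hjNum, hjDen] at *
    omega

lemma mem_b_shape {x : ℕ} {pre : List ℕ} {n : ℕ} (hpre : ∀ y ∈ pre, 2 ≤ y)
    (h : x ∈ pre ++ [2+n]) : 2 ≤ x := by
  rcases List.mem_append.1 h with h | h
  · exact hpre x h
  · simp at h
    omega

/-- duality for shape A. -/
lemma dualA (n : ℕ) : IsLinearDual [2+n] (2 :: List.replicate n 2) := by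
  refine ⟨?_, ?_, ?_, ?_⟩
  · intro x hx; simp at hx; omega
  · intro x hx
    rcases List.mem_cons.1 hx with h | h
    · omega
    · simp at h; omega
  · show (hj _).1 = (hj _).1
    have h2 : (2:ℕ) :: List.replicate n 2 = List.replicate (n+1) 2 ++ [] := by
      rw [List.replicate_succ]; simp
    rw [h2, hj_replicate]
    simp only [hj_cons, hj_nil]
    try dsimp only
    push_cast
    ring
  · show (hj _).2 + (hj _).2 = (hj _).1
    have h2 : (2:ℕ) :: List.replicate n 2 = List.replicate (n+1) 2 ++ [] := by
      rw [List.replicate_succ]; simp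
    rw [h2, hj_replicate]
    simp only [hj_cons, hj_nil]
    try dsimp only
    push_cast
    ring

/-- duality for shape B : `b = 2 :: seg W ++ [2+n]`, `c = wrd (W ++ [n])`. -/
lemma dualB : ∀ (W : List ℕ), W.length % 2 = 1 → ∀ (n : ℕ),
    IsLinearDual (2 :: (seg W ++ [2+n])) (wrd (W ++ [n])) := by
  intro W
  induction W using seg.induct with
  | case1 => simp
  | case2 w =>
    intro _ n
    have hb : (2 : ℕ) :: (seg [w] ++ [2+n]) = List.replicate (w+1) 2 ++ [2+n] := by
      rw [seg_single, List.replicate_succ]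
      simp
    have hc : wrd ([w] ++ [n]) = (3+w) :: (List.replicate n 2 ++ []) := by
      simp [wrd_cons]
    refine ⟨?_, ?_, ?_, ?_⟩
    · intro x hx
      simp at hx
      rcases hx with h | h | h <;> omega
    · intro x hx
      exact mem_wrd_ge_two hx
    · show (hj _).1 = (hj _).1
      rw [hb, hc]
      simp only [hj_cons, hj_replicate, hj_nil]
      try dsimp only
      push_cast
      ring
    · show (hj _).2 + (hj _).2 = (hj _).1
      rw [hb, hc]
      simp only [hj_cons, hj_replicate, hj_nil]
      try dsimp only
      push_cast
      ring
  | case3 w0 w1 W' ih =>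
    intro hodd n
    simp only [List.length_cons] at hodd
    have hW' : W'.length % 2 = 1 := by omega
    obtain ⟨hbI, hcI, hnI, hdI⟩ := ih hW' n
    simp only [hjNum, hjDen, hj_cons] at hnI hdI
    try dsimp only at hnI hdI
    push_cast at hnI hdI
    -- hnI : (hj (wrd (W'++[n]))).1 = 2 * (hj (seg W' ++ [2+n])).1 - (hj (seg W' ++ [2+n])).2
    have hc'2 : (hj (wrd (W' ++ [n]))).2
        = (hj (seg W' ++ [2+n])).1 - (hj (seg W' ++ [2+n])).2 := by omega
    have hbshape : (2:ℕ) :: (seg (w0 :: w1 :: W') ++ [2+n])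
        = List.replicate (w0+1) 2 ++ ((3+w1) :: (seg W' ++ [2+n])) := by
      rw [seg_cons_cons, List.replicate_succ]
      simp
    have hcshape : wrd ((w0 :: w1 :: W') ++ [n])
        = (3+w0) :: (List.replicate w1 2 ++ wrd (W' ++ [n])) := by
      rw [List.cons_append, List.cons_append, wrd_cons, seg_cons_wrd]
    refine ⟨?_, ?_, ?_, ?_⟩
    · intro x hx
      rw [hbshape] at hx
      rcases List.mem_append.1 hx with h | h
      · simp at h; omega
      · rcases List.mem_cons.1 h with h | h
        · omega
        · exact mem_b_shape (fun y hy => mem_seg_ge_two hy) h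
    · intro x hx
      rw [hcshape] at hx
      rcases List.mem_cons.1 hx with h | h
      · omega
      · rcases List.mem_append.1 h with h | h
        · simp at h; omega
        · exact mem_wrd_ge_two h
    · show (hj _).1 = (hj _).1
      rw [hbshape, hcshape]
      simp only [hj_cons, hj_replicate]
      try dsimp only
      rw [hnI, hc'2]
      push_cast
      ring
    · show (hj _).2 + (hj _).2 = (hj _).1
      rw [hbshape, hcshape]
      simp only [hj_cons, hj_replicate]
      try dsimp only
      rw [hnI, hc'2]
      push_cast
      ring

/-- duality for shape C : `b = (3+e) :: seg U ++ [2+n]`, `c = 2 :: seg (e :: (U ++ [n]))`. -/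
lemma dualC : ∀ (U : List ℕ), U.length % 2 = 1 → ∀ (e n : ℕ),
    IsLinearDual ((3+e) :: (seg U ++ [2+n])) (2 :: seg (e :: (U ++ [n]))) := by
  intro U
  induction U using seg.induct with
  | case1 => simp
  | case2 u =>
    intro _ e n
    have hb : (3+e : ℕ) :: (seg [u] ++ [2+n])
        = (3+e) :: (List.replicate u 2 ++ [2+n]) := by rw [seg_single]
    have hc : (2:ℕ) :: seg (e :: ([u] ++ [n]))
        = List.replicate (e+1) 2 ++ ((3+u) :: (List.replicate n 2 ++ [])) := by
      have h1 : (e : ℕ) :: ([u] ++ [n]) = e :: u :: [n] := by simp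
      rw [h1, seg_cons_cons, List.replicate_succ]
      simp
    refine ⟨?_, ?_, ?_, ?_⟩
    · intro x hx
      rcases List.mem_cons.1 hx with h | h
      · omega
      · exact mem_b_shape (fun y hy => by simp at hy; omega) h
    · intro x hx
      rcases List.mem_cons.1 hx with h | h
      · omega
      · exact mem_seg_ge_two h
    · show (hj _).1 = (hj _).1
      rw [hb, hc]
      simp only [hj_cons, hj_replicate, hj_nil]
      try dsimp only
      push_cast
      ring
    · show (hj _).2 + (hj _).2 = (hj _).1
      rw [hb, hc]
      simp only [hj_cons, hj_replicate, hj_nil]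
      try dsimp only
      push_cast
      ring
  | case3 u0 u1 U' ih =>
    intro hodd e n
    simp only [List.length_cons] at hodd
    have hU' : U'.length % 2 = 1 := by omega
    obtain ⟨hbI, hcI, hnI, hdI⟩ := ih hU' u1 n
    simp only [hjNum, hjDen, hj_cons] at hnI hdI
    try dsimp only at hnI hdI
    push_cast at hnI hdI
    -- atoms : X1 := (hj (seg U' ++ [2+n])).1, X2 := .2, S1 := (hj (seg (u1 :: (U' ++ [n])))).1, S2 := .2
    have hbshape : (3+e : ℕ) :: (seg (u0 :: u1 :: U') ++ [2+n])
        = (3+e) :: (List.replicate u0 2 ++ ((3+u1) :: (seg U' ++ [2+n]))) := by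
      rw [seg_cons_cons]
      simp
    have hcshape : (2:ℕ) :: seg (e :: ((u0 :: u1 :: U') ++ [n]))
        = List.replicate (e+1) 2 ++ ((3+u0) :: seg (u1 :: (U' ++ [n]))) := by
      have h1 : (e : ℕ) :: ((u0 :: u1 :: U') ++ [n]) = e :: u0 :: (u1 :: (U' ++ [n])) := by simp
      rw [h1, seg_cons_cons, List.replicate_succ]
      simp
    have e1 : 2 * (hj (seg (u1 :: (U' ++ [n])))).1 - (hj (seg (u1 :: (U' ++ [n])))).2
        = (3+(u1:ℤ)) * (hj (seg U' ++ [2+n])).1 - (hj (seg U' ++ [2+n])).2 := by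
      linear_combination hnI
    have e2 : (hj (seg U' ++ [2+n])).1 + (hj (seg (u1 :: (U' ++ [n])))).1
        = (3+(u1:ℤ)) * (hj (seg U' ++ [2+n])).1 - (hj (seg U' ++ [2+n])).2 := by
      linear_combination hdI
    have hS1 : (hj (seg (u1 :: (U' ++ [n])))).1
        = (2+(u1:ℤ)) * (hj (seg U' ++ [2+n])).1 - (hj (seg U' ++ [2+n])).2 := by
      linear_combination e2
    have hS2 : (hj (seg (u1 :: (U' ++ [n])))).2
        = (1+(u1:ℤ)) * (hj (seg U' ++ [2+n])).1 - (hj (seg U' ++ [2+n])).2 := by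
      linear_combination 2 * e2 - e1
    refine ⟨?_, ?_, ?_, ?_⟩
    · intro x hx
      rw [hbshape] at hx
      rcases List.mem_cons.1 hx with h | h
      · omega
      · rcases List.mem_append.1 h with h | h
        · simp at h; omega
        · rcases List.mem_cons.1 h with h | h
          · omega
          · exact mem_b_shape (fun y hy => mem_seg_ge_two hy) h
    · intro x hx
      rw [hcshape] at hx
      rcases List.mem_append.1 hx with h | h
      · simp at h; omega
      · rcases List.mem_cons.1 h with h | h
        · omega
        · exact mem_seg_ge_two h
    · show (hj _).1 = (hj _).1
      rw [hbshape, hcshape]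
      simp only [hj_cons, hj_replicate]
      try dsimp only
      rw [hS1, hS2]
      push_cast
      ring
    · show (hj _).2 + (hj _).2 = (hj _).1
      rw [hbshape, hcshape]
      simp only [hj_cons, hj_replicate]
      try dsimp only
      rw [hS1, hS2]
      push_cast
      ring

/-! ### decomposition of strings with entries ≥ 2 -/

lemma seg_surj : ∀ (t : List ℕ), (∀ x ∈ t, 2 ≤ x) →
    ∃ W, W.length % 2 = 1 ∧ t = seg W := by
  intro t
  induction t with
  | nil => exact fun _ => ⟨[0], by simp, by simp⟩
  | cons x r ih =>
    intro hx
    obtain ⟨W, hW, hr⟩ := ih (fun y hy => hx y (by simp [hy]))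
    have hx2 : 2 ≤ x := hx x (by simp)
    rcases Nat.lt_or_ge x 3 with h3 | h3
    · -- x = 2
      have hx0 : x = 2 := by omega
      cases W with
      | nil => simp at hW
      | cons w0 rest =>
        refine ⟨(w0+1) :: rest, by simpa using hW, ?_⟩
        rw [seg_succ_head, ← hr, hx0]
    · -- x ≥ 3
      refine ⟨0 :: (x - 3) :: W, by simp only [List.length_append, List.length_cons, List.length_reverse, List.length_nil, List.length_replicate]; omega, ?_⟩
      rw [seg_cons_cons, ← hr]
      simp
      omega

lemma decomp (b : List ℕ) (hb : b ≠ []) (hmem : ∀ x ∈ b, 2 ≤ x) :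
    (∃ n, b = [2+n]) ∨
    (∃ W n, W.length % 2 = 1 ∧ b = 2 :: (seg W ++ [2+n])) ∨
    (∃ e U n, U.length % 2 = 1 ∧ b = (3+e) :: (seg U ++ [2+n])) := by
  rcases List.eq_nil_or_concat b with rfl | ⟨L, x, rfl⟩
  · exact absurd rfl hb
  · have hx : 2 ≤ x := hmem x (by simp)
    cases L with
    | nil =>
      left
      exact ⟨x - 2, by simp; omega⟩
    | cons b1 t =>
      obtain ⟨W, hW, ht⟩ := seg_surj t (fun y hy => hmem y (by simp [hy]))
      have hb1 : 2 ≤ b1 := hmem b1 (by simp)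
      rcases Nat.lt_or_ge b1 3 with h3 | h3
      · right; left
        refine ⟨W, x - 2, hW, ?_⟩
        rw [← ht]
        have : b1 = 2 := by omega
        simp [this]
        omega
      · right; right
        refine ⟨b1 - 3, W, x - 2, hW, ?_⟩
        rw [← ht]
        simp
        constructor
        · omega
        · omega

/-! ### palindrome characterisations -/

lemma palB (W : List ℕ) (hW : W.length % 2 = 1) (n : ℕ) :
    ((2+1) :: (seg W ++ [2+n])).reverse = (2+1) :: (seg W ++ [2+n]) ↔
      (n = 1 ∧ W.reverse = W) := by
  have hrev : ((2+1) :: (seg W ++ [2+n])).reverse = (2+n) :: ((seg W).reverse ++ [2+1]) := by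
    simp
  rw [hrev]
  constructor
  · intro hp
    rw [List.cons.injEq] at hp
    have hn : n = 1 := by omega
    subst hn
    have h2 := List.append_cancel_right (hp.2.trans rfl)
    have h3 : seg W.reverse = seg W := by rw [← seg_reverse W hW, h2]
    exact ⟨rfl, seg_inj (by simp [hW]) h3⟩
  · rintro ⟨rfl, hWr⟩
    rw [List.cons.injEq]
    refine ⟨rfl, ?_⟩
    rw [seg_reverse W hW, hWr]

lemma palC (U : List ℕ) (hU : U.length % 2 = 1) (e n : ℕ) :
    ((3+e+1) :: (seg U ++ [2+n])).reverse = (3+e+1) :: (seg U ++ [2+n]) ↔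
      (n = e + 2 ∧ U.reverse = U) := by
  have hrev : ((3+e+1) :: (seg U ++ [2+n])).reverse = (2+n) :: ((seg U).reverse ++ [3+e+1]) := by
    simp
  rw [hrev]
  constructor
  · intro hp
    rw [List.cons.injEq] at hp
    have hn : n = e + 2 := by omega
    subst hn
    have h2' : (seg U).reverse ++ [3+e+1] = seg U ++ [3+e+1] := by
      have h5 := hp.2
      rw [show (2+(e+2) : ℕ) = 3+e+1 by omega] at h5
      exact h5
    have h2 := List.append_cancel_right h2'
    have h3 : seg U.reverse = seg U := by rw [← seg_reverse U hU, h2]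
    exact ⟨rfl, seg_inj (by simp [hU]) h3⟩
  · rintro ⟨rfl, hUr⟩
    rw [List.cons.injEq]
    refine ⟨by omega, ?_⟩
    rw [seg_reverse U hU, hUr, show (2+(e+2) : ℕ) = 3+e+1 by omega]

/-! ### the word identities -/

lemma odd_back (W : List ℕ) (hW : W.length % 2 = 1) :
    ∃ W'' v, W = W'' ++ [v] ∧ W''.length % 2 = 0 := by
  rcases List.eq_nil_or_concat W with rfl | ⟨W'', v, rfl⟩
  · simp at hW
  · refine ⟨W'', v, by simp, ?_⟩
    simp at hW
    omega

lemma keyB (W : List ℕ) (hW : W.length % 2 = 1) (n' : ℕ) :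
    ((2+3) :: (seg W ++ [2+(n'+1)])) ++ [2] ++ (wrd (W ++ [n'+1])).reverse
      = wrd ((2 :: (W ++ [n'])) ++ ((n'+2) :: (W.reverse ++ [0]))) := by
  obtain ⟨W'', v, rfl, hW''⟩ := odd_back W hW
  -- reverse part
  have hT : (wrd ((W'' ++ [v]) ++ [n'+1])).reverse
      = List.replicate (n'+1) 2 ++ wrd (v :: W''.reverse) := by
    have h1 : (W'' ++ [v]) ++ [n'+1] = W'' ++ [v, n'+1] := by simp
    rw [h1]
    exact wrd_reverse_T W''.length W'' v (n'+1) rfl hW''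
  have hWrev : (W'' ++ [v]).reverse = v :: W''.reverse := by simp
  -- rhs
  have hrhs : wrd ((2 :: ((W'' ++ [v]) ++ [n'])) ++ ((n'+2) :: ((W'' ++ [v]).reverse ++ [0])))
      = (2+3) :: (seg ((W'' ++ [v]) ++ [n'])
          ++ (List.replicate (n'+2) 2 ++ wrd ((W'' ++ [v]).reverse ++ [0]))) := by
    rw [List.cons_append, wrd_cons,
      seg_append_even ((W'' ++ [v]) ++ [n']) ((n'+2) :: ((W'' ++ [v]).reverse ++ [0]))
        (by simp only [List.length_append, List.length_cons, List.length_reverse, List.length_nil, List.length_replicate]; omega), seg_cons_wrd]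
  rw [hrhs, hT, hWrev]
  have h5 : wrd ((v :: W''.reverse) ++ [0]) = wrd (v :: W''.reverse) := by
    rw [wrd_append_single _ _ _ (by simp only [List.length_append, List.length_cons, List.length_reverse, List.length_nil, List.length_replicate]; omega)]
    simp
  rw [h5]
  have h6 : seg ((W'' ++ [v]) ++ [n']) = seg (W'' ++ [v]) ++ [2+(n'+1)] := by
    rw [show (2+(n'+1):ℕ) = 3+n' by omega]
    exact seg_append_single_odd _ _ (by simp only [List.length_append, List.length_cons, List.length_reverse, List.length_nil, List.length_replicate]; omega)
  rw [h6]
  have h7 : List.replicate (n'+2) (2:ℕ) = 2 :: List.replicate (n'+1) 2 := by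
    rw [List.replicate_succ]
  rw [h7]
  simp [List.append_assoc]

lemma keyC (U : List ℕ) (hU : U.length % 2 = 1) (e n' : ℕ) :
    ((3+e+3) :: (seg U ++ [2+(n'+1)])) ++ [2] ++ (2 :: seg (e :: (U ++ [n'+1]))).reverse
      = wrd (((3+e) :: (U ++ [n'])) ++ ((n'+2) :: (U.reverse ++ [e+1]))) := by
  have hX : (e :: (U ++ [n'+1])).length % 2 = 1 := by simp only [List.length_append, List.length_cons, List.length_reverse, List.length_nil, List.length_replicate]; omega
  have hsegrev : (seg (e :: (U ++ [n'+1]))).reverse = seg ((n'+1) :: (U.reverse ++ [e])) := by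
    rw [seg_reverse _ hX]
    congr 1
    simp
  -- rhs
  obtain ⟨u0, t, hu⟩ : ∃ u0 t, U.reverse = u0 :: t := by
    cases hUr : U.reverse with
    | nil =>
      have : U = [] := by simpa using congrArg List.reverse hUr
      rw [this] at hU
      simp at hU
    | cons u0 t => exact ⟨u0, t, rfl⟩
  have ht : t.length % 2 = 0 := by
    have : U.reverse.length = U.length := by simp
    rw [hu] at this
    simp at this
    omega
  have hrhs : wrd (((3+e) :: (U ++ [n'])) ++ ((n'+2) :: (U.reverse ++ [e+1])))
      = (3+e+3) :: (seg (U ++ [n'])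
          ++ (List.replicate (n'+2) 2 ++ wrd (U.reverse ++ [e+1]))) := by
    rw [List.cons_append, wrd_cons,
      seg_append_even (U ++ [n']) ((n'+2) :: (U.reverse ++ [e+1])) (by simp only [List.length_append, List.length_cons, List.length_reverse, List.length_nil, List.length_replicate]; omega),
      seg_cons_wrd]
    have : 3 + (3 + e) = 3 + e + 3 := by omega
    rw [this]
  rw [hrhs]
  have h6 : seg (U ++ [n']) = seg U ++ [2+(n'+1)] := by
    rw [show (2+(n'+1):ℕ) = 3+n' by omega]
    exact seg_append_single_odd _ _ hU
  rw [h6]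
  have h8 : wrd (U.reverse ++ [e+1]) = wrd (U.reverse ++ [e]) ++ [2] := by
    rw [hu, wrd_append_single _ _ _ ht, wrd_append_single _ _ _ ht, List.replicate_succ']
    simp
  have h9 : seg ((n'+1) :: (U.reverse ++ [e])) = List.replicate (n'+1) 2 ++ wrd (U.reverse ++ [e]) := by
    rw [seg_cons_wrd]
  have h7 : List.replicate (n'+2) (2:ℕ) = 2 :: List.replicate (n'+1) 2 := by
    rw [List.replicate_succ]
  rw [h8, h7]
  have hlhs : ((3+e+3) :: (seg U ++ [2+(n'+1)])) ++ [2] ++ (2 :: seg (e :: (U ++ [n'+1]))).reverse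
      = (3+e+3) :: (seg U ++ [2+(n'+1)] ++ [2]
          ++ (List.replicate (n'+1) 2 ++ wrd (U.reverse ++ [e])) ++ [2]) := by
    rw [List.reverse_cons, hsegrev, h9]
    simp [List.append_assoc]
  rw [hlhs]
  simp [List.append_assoc]


/-- Let `(b_1,...,b_k)` and `(c_1,...,c_l)` be linear-dual strings and let
`a = (b_1+3, b_2,...,b_k, 2, c_l,...,c_1)`.  Then `a ∈ S_{2c}` if and only if
`(b_1+1, b_2,...,b_k)` is a palindrome. -/
theorem s2a_mem_s2c_iff_palindrome (b c : List ℕ) (h : IsLinearDual b c)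
    (hb : b ≠ []) :
    InS2c ((b.headI + 3) :: b.tail ++ [2] ++ c.reverse) ↔
      ((b.headI + 1) :: b.tail).reverse = (b.headI + 1) :: b.tail := by
  have hbmem : ∀ x ∈ b, 2 ≤ x := h.1
  rcases decomp b hb hbmem with ⟨n, rfl⟩ | ⟨W, n, hW, rfl⟩ | ⟨e, U, n, hU, rfl⟩
  · -- case A : b = [2+n]
    have hc : c = 2 :: List.replicate n 2 := dual_unique h (dualA n)
    subst hc
    simp only [List.headI, List.tail_cons]
    apply iff_of_true
    · apply (inS2c_iff_doubled _).2
      refine ⟨[n+2], by simp, 0, Or.inl ?_⟩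
      rw [List.rotate_zero]
      have h1 : List.replicate (n+2) (2:ℕ) = 2 :: (List.replicate n 2 ++ [2]) := by
        rw [List.replicate_succ, List.replicate_succ']
      have h2 : wrd ([n+2] ++ [n+2]) = (3+(n+2)) :: List.replicate (n+2) 2 := by
        rw [List.singleton_append, wrd_cons, seg_single]
      rw [h2, h1, show 3+(n+2) = 2+n+3 by omega]
      simp
    · simp
  · -- case B : b = 2 :: (seg W ++ [2+n])
    have hc : c = wrd (W ++ [n]) := dual_unique h (dualB W hW n)
    subst hc
    simp only [List.headI, List.tail_cons]
    rw [palB W hW n]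
    rcases n with _ | n'
    · -- n = 0 : both sides fail
      apply iff_of_false
      · intro hIn
        have hcnt := inS2c_cnt_odd hIn
        obtain ⟨w, t, rfl⟩ : ∃ w t, W = w :: t := by
          cases W with
          | nil => simp at hW
          | cons a b => exact ⟨a, b, rfl⟩
        have e1 : wrd ((w::t) ++ [0]) = (3+w) :: seg (t ++ [0]) := by
          rw [List.cons_append, wrd_cons]
        rw [e1] at hcnt
        simp only [List.countP_append, List.countP_cons, List.countP_reverse, List.countP_nil,
          cnt_seg] at hcnt
        simp only [List.length_cons, List.length_append, List.length_nil] at hcnt hW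
        norm_num at hcnt
        omega
      · rintro ⟨hp1, -⟩
        exact absurd hp1 (by omega)
    · -- n = n' + 1
      constructor
      · intro hIn
        obtain ⟨hh, hhodd, hcyc⟩ := (inS2c_iff_doubled _).1 hIn
        obtain ⟨h', hlen, hA⟩ := align _ hh hhodd hcyc (by simp) (by simp)
        have hmain : wrd (h' ++ h') = wrd ((2 :: (W ++ [n'])) ++ ((n'+2) :: (W.reverse ++ [0]))) := by
          rw [← hA]
          exact keyB W hW n'
        have hZ : h' ++ h' = (2 :: (W ++ [n'])) ++ ((n'+2) :: (W.reverse ++ [0])) :=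
          wrd_inj (by simp only [List.length_append]; omega)
            (by simp only [List.length_append, List.length_cons, List.length_reverse, List.length_nil]; omega)
            hmain
        have hlh : h'.length = W.length + 2 := by
          have := congrArg List.length hZ
          simp only [List.length_append, List.length_cons, List.length_reverse, List.length_nil] at this
          omega
        obtain ⟨hh1, hh2⟩ := List.append_inj hZ
          (by simp only [List.length_cons, List.length_append, List.length_reverse, List.length_nil]; omega)
        have h12 : (2 :: (W ++ [n'])) = ((n'+2) :: (W.reverse ++ [0])) := by
          rw [← hh1, ← hh2]
        rw [List.cons.injEq] at h12
        have hn' : n' = 0 := by omega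
        subst hn'
        have hWrev : W.reverse = W := (List.append_cancel_right h12.2).symm
        exact ⟨rfl, hWrev⟩
      · rintro ⟨hn, hWrev⟩
        have hn' : n' = 0 := by omega
        subst hn'
        apply (inS2c_iff_doubled _).2
        refine ⟨2 :: (W ++ [0]), ?_, 0, Or.inl ?_⟩
        · simp only [List.length_cons, List.length_append, List.length_nil]
          omega
        · rw [List.rotate_zero, keyB W hW 0]
          rw [hWrev]
  · -- case C : b = (3+e) :: (seg U ++ [2+n])
    have hc : c = 2 :: seg (e :: (U ++ [n])) := dual_unique h (dualC U hU e n)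
    subst hc
    simp only [List.headI, List.tail_cons]
    rw [palC U hU e n]
    rcases n with _ | n'
    · -- n = 0 : both sides fail
      apply iff_of_false
      · intro hIn
        have hcnt := inS2c_cnt_odd hIn
        simp only [List.countP_append, List.countP_cons, List.countP_reverse, List.countP_nil,
          cnt_seg] at hcnt
        simp only [List.length_cons, List.length_append, List.length_nil] at hcnt hU
        norm_num at hcnt
        omega
      · rintro ⟨hp1, -⟩
        exact absurd hp1 (by omega)
    · -- n = n' + 1
      constructor
      · intro hIn
        obtain ⟨hh, hhodd, hcyc⟩ := (inS2c_iff_doubled _).1 hIn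
        obtain ⟨h', hlen, hA⟩ := align _ hh hhodd hcyc (by simp) (by simp)
        have hmain : wrd (h' ++ h') = wrd (((3+e) :: (U ++ [n'])) ++ ((n'+2) :: (U.reverse ++ [e+1]))) := by
          rw [← hA]
          exact keyC U hU e n'
        have hZ : h' ++ h' = ((3+e) :: (U ++ [n'])) ++ ((n'+2) :: (U.reverse ++ [e+1])) :=
          wrd_inj (by simp only [List.length_append]; omega)
            (by simp only [List.length_append, List.length_cons, List.length_reverse, List.length_nil]; omega)
            hmain
        have hlh : h'.length = U.length + 2 := by
          have := congrArg List.length hZ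
          simp only [List.length_append, List.length_cons, List.length_reverse, List.length_nil] at this
          omega
        obtain ⟨hh1, hh2⟩ := List.append_inj hZ
          (by simp only [List.length_cons, List.length_append, List.length_reverse, List.length_nil]; omega)
        have h12 : ((3+e) :: (U ++ [n'])) = ((n'+2) :: (U.reverse ++ [e+1])) := by
          rw [← hh1, ← hh2]
        rw [List.cons.injEq] at h12
        have hn' : n' = e + 1 := by omega
        subst hn'
        have hUr : U ++ [e+1] = U.reverse ++ [e+1] := h12.2
        have hUrev : U.reverse = U := (List.append_cancel_right hUr).symm
        exact ⟨by omega, hUrev⟩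
      · rintro ⟨hn, hUrev⟩
        have hn' : n' = e + 1 := by omega
        subst hn'
        apply (inS2c_iff_doubled _).2
        refine ⟨(3+e) :: (U ++ [e+1]), ?_, 0, Or.inl ?_⟩
        · simp only [List.length_cons, List.length_append, List.length_nil]
          omega
        · rw [List.rotate_zero, keyC U hU e (e+1)]
          rw [hUrev, show e+1+2 = 3+e by omega]
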